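/- Assume 0 < v_w < 1 and μ_mu = μ_mw. If (A_u, A_w, F_u, F_w, M_u, M_w) is an equilibrium of the Wolbachia mosquito model with all six components strictly positive, then the ratio k = A_w/A_u satisfies the quadratic equation v_u k² − (2v_w − 1)k + v_w(R_0⁻² − 1) = 0, where R_0 = sqrt(v_w (φ_w/μ_fw)(μ_fu/φ_u)). -/

import Mathlib

/-- The Wolbachia mosquito model vector field on states
`x = (A_u, A_w, F_u, F_w, M_u, M_w)` (indices 0..5). -/
noncomputable def wolbField (bf vw φu φw ψ μa μfu μfw μmu μmw Ka : ℝ)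
    (x : Fin 6 → ℝ) : Fin 6 → ℝ :=
  ![ φu * x 2 * (x 4 / (x 4 + x 5)) * (1 - (x 0 + x 1) / Ka)
      + (1 - vw) * (φw * x 3 * (x 4 / (x 4 + x 5)) * (1 - (x 0 + x 1) / Ka)
          + φw * x 3 * (1 - x 4 / (x 4 + x 5)) * (1 - (x 0 + x 1) / Ka))
      - (μa + ψ) * x 0,
    vw * (φw * x 3 * (x 4 / (x 4 + x 5)) * (1 - (x 0 + x 1) / Ka)
          + φw * x 3 * (1 - x 4 / (x 4 + x 5)) * (1 - (x 0 + x 1) / Ka))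
      - (μa + ψ) * x 1,
    bf * ψ * x 0 - μfu * x 2,
    bf * ψ * x 1 - μfw * x 3,
    (1 - bf) * ψ * x 0 - μmu * x 4,
    (1 - bf) * ψ * x 1 - μmw * x 5 ]

/-- with incomplete vertical transmission `0 < v_w < 1` and equal
male death rates, at any strictly positive equilibrium the ratio `k = A_w/A_u`
satisfies `v_u k² − (2v_w − 1)k + v_w(R₀⁻² − 1) = 0`. -/
theorem endemic_ratio_satisfies_quadratic
    (bf vw φu φw ψ μa μfu μfw μmu μmw Ka : ℝ)
    (hbf : 0 < bf) (hbf1 : bf < 1) (hvw0 : 0 < vw) (hvw1 : vw < 1)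
    (hφu : 0 < φu) (hφw : 0 < φw) (hψ : 0 < ψ) (hμa : 0 < μa)
    (hμfu : 0 < μfu) (hμfw : 0 < μfw) (hμmu : 0 < μmu) (hμmw : 0 < μmw)
    (hKa : 0 < Ka) (hmm : μmu = μmw)
    (x : Fin 6 → ℝ) (hpos : ∀ i, 0 < x i)
    (heq : wolbField bf vw φu φw ψ μa μfu μfw μmu μmw Ka x = 0)
    (R0 : ℝ) (hR0 : R0 = Real.sqrt (vw * (φw / μfw) * (μfu / φu)))
    (k : ℝ) (hk : k = x 1 / x 0) :
    (1 - vw) * k ^ 2 - (2 * vw - 1) * k + vw * (1 / R0 ^ 2 - 1) = 0 := by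
  have hx0 := hpos 0
  have hx1 := hpos 1
  have hx2 := hpos 2
  have hx3 := hpos 3
  have hx4 := hpos 4
  have hx5 := hpos 5
  subst hmm
  have h0 := congrFun heq 0
  have h1 := congrFun heq 1
  have h2 : bf * ψ * x 0 - μfu * x 2 = 0 := congrFun heq 2
  have h3 : bf * ψ * x 1 - μfw * x 3 = 0 := congrFun heq 3
  have h4 : (1 - bf) * ψ * x 0 - μmu * x 4 = 0 := congrFun heq 4
  have h5 : (1 - bf) * ψ * x 1 - μmu * x 5 = 0 := congrFun heq 5
  simp only [wolbField, Matrix.cons_val_zero, Matrix.cons_val_one, Matrix.head_cons,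
    Pi.zero_apply] at h0 h1
  have hs : x 4 + x 5 ≠ 0 := by positivity
  have hx01 : (0:ℝ) < x 0 + x 1 := by linarith
  have hx01' : x 0 + x 1 ≠ 0 := ne_of_gt hx01
  have hm : x 4 / (x 4 + x 5) = x 0 / (x 0 + x 1) := by
    rw [div_eq_div_iff hs hx01']
    apply mul_left_cancel₀ (ne_of_gt hμmu)
    linear_combination x 0 * h5 - x 1 * h4
  rw [hm] at h0 h1
  have e1 : vw * φw * x 3 * (1 - (x 0 + x 1) / Ka) = (μa + ψ) * x 1 := by
    linear_combination h1
  have e0 : φu * x 2 * (x 0 / (x 0 + x 1)) * (1 - (x 0 + x 1) / Ka)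
      + (1 - vw) * φw * x 3 * (1 - (x 0 + x 1) / Ka) = (μa + ψ) * x 0 := by
    linear_combination h0
  have hGpos : 0 < 1 - (x 0 + x 1) / Ka := by
    nlinarith [mul_pos (add_pos hμa hψ) hx1, mul_pos (mul_pos hvw0 hφw) hx3]
  have hGne : (1 - (x 0 + x 1) / Ka) ≠ 0 := ne_of_gt hGpos
  have e2 : ((φu * x 2 * (x 0 / (x 0 + x 1)) + (1 - vw) * φw * x 3) * x 1)
      * (1 - (x 0 + x 1) / Ka) = (vw * φw * x 3 * x 0) * (1 - (x 0 + x 1) / Ka) := by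
    linear_combination x 1 * e0 - x 0 * e1
  have e3 : (φu * x 2 * (x 0 / (x 0 + x 1)) + (1 - vw) * φw * x 3) * x 1
      = vw * φw * x 3 * x 0 := mul_right_cancel₀ hGne e2
  have h2' : x 2 = bf * ψ * x 0 / μfu := by
    field_simp
    linarith [h2]
  have h3' : x 3 = bf * ψ * x 1 / μfw := by
    field_simp
    linarith [h3]
  rw [h2', h3'] at e3
  have hR2 : R0 ^ 2 = vw * (φw / μfw) * (μfu / φu) := by
    rw [hR0, sq]
    exact Real.mul_self_sqrt (by positivity)
  have hbψ : bf * ψ ≠ 0 := by positivity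
  rw [hk, hR2]
  have hc : bf * ψ * x 1 * μfw ≠ 0 := by positivity
  have E : φu * μfw * x 0 ^ 2 + (1 - vw) * φw * μfu * x 1 * (x 0 + x 1)
      - vw * φw * μfu * x 0 * (x 0 + x 1) = 0 := by
    apply mul_left_cancel₀ hc
    field_simp at e3
    linear_combination (bf * ψ * x 1 * μfw) * e3
  field_simp
  linear_combination E
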